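/- Let T_j (j = 1,…,m) be nonexpansive self-mappings of C, {β_n^{(j)}} ⊂ (0,1), and define recursively Γ_n^{(m+1)} x = x and Γ_n^{(j)} x = β_n^{(j)} x + (1−β_n^{(j)}) T_j(Γ_n^{(j+1)} x). Then for every x and every j ∈ {1,…,m}: ‖Γ_{n+1}^{(j)} x − Γ_n^{(j)} x‖ ≤ K · Σ_{p=j}^m |β_{n+1}^{(p)} − β_n^{(p)}|, where K is a constant depending only on x and the mappings T_p for p ≥ j. -/
import Mathlib


open Filter Topology

/-- `Gamma T β m n k` is the mapping `Γ_n^{(j)}` with `k = m + 1 - j` "inner layers":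
`Gamma T β m n 0 = Γ_n^{(m+1)} = id` and
`Γ_n^{(j)} x = β_n^{(j)} • x + (1 - β_n^{(j)}) • T_j (Γ_n^{(j+1)} x)`
corresponds to `Gamma T β m n (k+1) x = β (m-k) n • x + (1 - β (m-k) n) • T (m-k) (Gamma T β m n k x)`. -/
def Gamma {X : Type*} [AddCommGroup X] [Module ℝ X]
    (T : ℕ → X → X) (β : ℕ → ℕ → ℝ) (m n : ℕ) : ℕ → X → X
  | 0 => id
  | k + 1 => fun x => β (m - k) n • x + (1 - β (m - k) n) • T (m - k) (Gamma T β m n k x)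

lemma Gamma_mem {X : Type*} [NormedAddCommGroup X] [NormedSpace ℝ X]
    (C : Set X) (hC : Convex ℝ C) (m : ℕ) (T : ℕ → X → X)
    (hTC : ∀ j, 1 ≤ j → j ≤ m → ∀ x ∈ C, T j x ∈ C)
    (β : ℕ → ℕ → ℝ) (hβ : ∀ j n, β j n ∈ Set.Ioo (0 : ℝ) 1) (n : ℕ) :
    ∀ k ≤ m, ∀ x ∈ C, Gamma T β m n k x ∈ C := by
  intro k
  induction k with
  | zero => intro _ x hx; simpa [Gamma] using hx
  | succ k ih =>
    intro hk x hx
    have h1 : Gamma T β m n k x ∈ C := ih (by omega) x hx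
    have h2 : T (m - k) (Gamma T β m n k x) ∈ C := hTC _ (by omega) (by omega) _ h1
    have hb := hβ (m - k) n
    have : β (m - k) n • x + (1 - β (m - k) n) • T (m - k) (Gamma T β m n k x) ∈ C :=
      hC hx h2 hb.1.le (by linarith [hb.2]) (by ring)
    simpa [Gamma] using this

lemma Gamma_dist {X : Type*} [NormedAddCommGroup X] [NormedSpace ℝ X]
    (C : Set X) (hC : Convex ℝ C) (m : ℕ) (T : ℕ → X → X)
    (hTC : ∀ j, 1 ≤ j → j ≤ m → ∀ x ∈ C, T j x ∈ C)
    (hT : ∀ j, 1 ≤ j → j ≤ m → ∀ x ∈ C, ∀ y ∈ C, ‖T j x - T j y‖ ≤ ‖x - y‖)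
    (β : ℕ → ℕ → ℝ) (hβ : ∀ j n, β j n ∈ Set.Ioo (0 : ℝ) 1) (n : ℕ) :
    ∀ k ≤ m, ∀ x ∈ C,
      ‖Gamma T β m n k x - x‖ ≤ ∑ i ∈ Finset.range k, ‖T (m - i) x - x‖ := by
  intro k
  induction k with
  | zero => intro _ x hx; simp [Gamma]
  | succ k ih =>
    intro hk x hx
    set y := Gamma T β m n k x with hy
    have hyC : y ∈ C := Gamma_mem C hC m T hTC β hβ n k (by omega) x hx
    have hb := hβ (m - k) n
    have hj1 : 1 ≤ m - k := by omega
    have hj2 : m - k ≤ m := by omega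
    have heq : Gamma T β m n (k + 1) x - x
        = (1 - β (m - k) n) • (T (m - k) y - x) := by
      show β (m - k) n • x + (1 - β (m - k) n) • T (m - k) y - x
        = (1 - β (m - k) n) • (T (m - k) y - x)
      module
    have h1 : ‖T (m - k) y - x‖ ≤ ‖y - x‖ + ‖T (m - k) x - x‖ := by
      calc ‖T (m - k) y - x‖ ≤ ‖T (m - k) y - T (m - k) x‖ + ‖T (m - k) x - x‖ :=
            norm_sub_le_norm_sub_add_norm_sub _ _ _
        _ ≤ ‖y - x‖ + ‖T (m - k) x - x‖ := by
            have := hT (m - k) hj1 hj2 y hyC x hx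
            linarith
    have h2 : ‖Gamma T β m n (k + 1) x - x‖ ≤ ‖T (m - k) y - x‖ := by
      rw [heq, norm_smul, Real.norm_eq_abs, abs_of_nonneg (by linarith [hb.2])]
      nlinarith [norm_nonneg (T (m - k) y - x), hb.1]
    rw [Finset.sum_range_succ]
    have := ih (by omega) x hx
    linarith

theorem stmt_9
    {X : Type*} [NormedAddCommGroup X] [NormedSpace ℝ X]
    (C : Set X) (hC : Convex ℝ C)
    (m : ℕ) (hm : 0 < m)
    (T : ℕ → X → X) (hTC : ∀ j, 1 ≤ j → j ≤ m → ∀ x ∈ C, T j x ∈ C)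
    (hT : ∀ j, 1 ≤ j → j ≤ m → ∀ x ∈ C, ∀ y ∈ C, ‖T j x - T j y‖ ≤ ‖x - y‖)
    (β : ℕ → ℕ → ℝ) (hβ : ∀ j n, β j n ∈ Set.Ioo (0 : ℝ) 1) :
    ∀ x ∈ C, ∀ j, 1 ≤ j → j ≤ m → ∃ K, 0 ≤ K ∧ ∀ n,
      ‖Gamma T β m (n + 1) (m + 1 - j) x - Gamma T β m n (m + 1 - j) x‖ ≤
        K * ∑ p ∈ Finset.Icc j m, |β p (n + 1) - β p n| := by
  intro x hx j hj1 hj2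
  suffices h : ∀ k ≤ m, ∃ K, 0 ≤ K ∧ ∀ n,
      ‖Gamma T β m (n + 1) k x - Gamma T β m n k x‖ ≤
        K * ∑ p ∈ Finset.Icc (m + 1 - k) m, |β p (n + 1) - β p n| by
    obtain ⟨K, hK, hKn⟩ := h (m + 1 - j) (by omega)
    refine ⟨K, hK, fun n => ?_⟩
    have : m + 1 - (m + 1 - j) = j := by omega
    simpa only [this] using hKn n
  intro k
  induction k with
  | zero => exact fun _ => ⟨0, le_refl 0, fun n => by simp [Gamma]⟩
  | succ k ih =>
    intro hk
    obtain ⟨K, hK, hKn⟩ := ih (by omega)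
    set Ck : ℝ := ‖T (m - k) x - x‖ + ∑ i ∈ Finset.range k, ‖T (m - i) x - x‖ with hCk
    have hCk0 : 0 ≤ Ck := by
      apply add_nonneg (norm_nonneg _)
      exact Finset.sum_nonneg fun i _ => norm_nonneg _
    refine ⟨K + Ck, by linarith, fun n => ?_⟩
    have hj1 : 1 ≤ m - k := by omega
    have hj2 : m - k ≤ m := by omega
    set b' := β (m - k) (n + 1) with hb'
    set b := β (m - k) n with hb
    set y' := Gamma T β m (n + 1) k x with hy'
    set y := Gamma T β m n k x with hy
    have hyC : y ∈ C := Gamma_mem C hC m T hTC β hβ n k (by omega) x hx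
    have hy'C : y' ∈ C := Gamma_mem C hC m T hTC β hβ (n + 1) k (by omega) x hx
    have hbm := hβ (m - k) n
    have hbm' := hβ (m - k) (n + 1)
    have heq : Gamma T β m (n + 1) (k + 1) x - Gamma T β m n (k + 1) x
        = (b' - b) • (x - T (m - k) y) + (1 - b') • (T (m - k) y' - T (m - k) y) := by
      show b' • x + (1 - b') • T (m - k) y' - (b • x + (1 - b) • T (m - k) y)
        = (b' - b) • (x - T (m - k) y) + (1 - b') • (T (m - k) y' - T (m - k) y)
      module
    have hS : (0 : ℝ) ≤ ∑ p ∈ Finset.Icc (m + 1 - k) m, |β p (n + 1) - β p n| :=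
      Finset.sum_nonneg fun p _ => abs_nonneg _
    -- bound on ‖x - T y‖
    have hxTy : ‖x - T (m - k) y‖ ≤ Ck := by
      calc ‖x - T (m - k) y‖ ≤ ‖x - T (m - k) x‖ + ‖T (m - k) x - T (m - k) y‖ :=
            norm_sub_le_norm_sub_add_norm_sub _ _ _
        _ ≤ ‖T (m - k) x - x‖ + ‖x - y‖ := by
            rw [norm_sub_rev x]
            have := hT (m - k) hj1 hj2 x hx y hyC
            linarith
        _ ≤ Ck := by
            have hd := Gamma_dist C hC m T hTC hT β hβ n k (by omega) x hx
            rw [norm_sub_rev x y]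
            rw [hCk]
            linarith
    have hTy : ‖T (m - k) y' - T (m - k) y‖ ≤ ‖y' - y‖ := hT (m - k) hj1 hj2 y' hy'C y hyC
    have hnorm : ‖Gamma T β m (n + 1) (k + 1) x - Gamma T β m n (k + 1) x‖ ≤
        |b' - b| * Ck + ‖y' - y‖ := by
      rw [heq]
      calc ‖(b' - b) • (x - T (m - k) y) + (1 - b') • (T (m - k) y' - T (m - k) y)‖
          ≤ ‖(b' - b) • (x - T (m - k) y)‖ + ‖(1 - b') • (T (m - k) y' - T (m - k) y)‖ :=
            norm_add_le _ _
        _ ≤ |b' - b| * Ck + ‖y' - y‖ := by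
            rw [norm_smul, norm_smul, Real.norm_eq_abs, Real.norm_eq_abs,
              abs_of_nonneg (by linarith [hbm'.2] : (0:ℝ) ≤ 1 - b')]
            have h3 : |b' - b| * ‖x - T (m - k) y‖ ≤ |b' - b| * Ck :=
              mul_le_mul_of_nonneg_left hxTy (abs_nonneg _)
            nlinarith [norm_nonneg (T (m - k) y' - T (m - k) y), hbm'.1,
              norm_nonneg (y' - y)]
    -- split sum
    have hsplit : ∑ p ∈ Finset.Icc (m + 1 - (k + 1)) m, |β p (n + 1) - β p n|
        = |b' - b| + ∑ p ∈ Finset.Icc (m + 1 - k) m, |β p (n + 1) - β p n| := by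
      have h1 : m + 1 - (k + 1) = m - k := by omega
      have h2 : m + 1 - k = (m - k) + 1 := by omega
      rw [h1, h2]
      rw [show Finset.Icc (m - k) m = insert (m - k) (Finset.Icc (m - k + 1) m) by
        ext p; simp [Finset.mem_Icc, Finset.mem_insert]; omega]
      rw [Finset.sum_insert (by simp)]
    rw [hsplit]
    have hy'y := hKn n
    have hab : (0:ℝ) ≤ |b' - b| := abs_nonneg _
    nlinarith [mul_le_mul_of_nonneg_left hS hCk0, mul_le_mul_of_nonneg_left hab hK]
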